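/- The quotient of Ł_{n,k} by its radical (the intersection of its maximal filters) is isomorphic to the finite chain Ł_n; that is, Ł_{n,k} has rank n. -/

import Mathlib

/-- The interval `[0, u]` in a totally ordered abelian group: the universe of
the Wajsberg hoop `Γ(G, u)`. -/
def Gam {G : Type*} [AddCommGroup G] [LinearOrder G] [IsOrderedAddMonoid G] (u : G) : Type _ :=
  {x : G // 0 ≤ x ∧ x ≤ u}

/-- Product `a·b = max(a+b-u, 0)` of `Γ(G,u)`. -/
def hmul {G : Type*} [AddCommGroup G] [LinearOrder G] [IsOrderedAddMonoid G] {u : G} (a b : Gam u) : Gam u :=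
  ⟨max (a.1 + b.1 - u) 0, le_max_right _ _,
    max_le (sub_le_iff_le_add.mpr (add_le_add a.2.2 b.2.2)) (a.2.1.trans a.2.2)⟩

/-- Residuum `a→b = min(u-a+b, u)` of `Γ(G,u)`. -/
def himp {G : Type*} [AddCommGroup G] [LinearOrder G] [IsOrderedAddMonoid G] {u : G} (a b : Gam u) : Gam u :=
  ⟨min (u - a.1 + b.1) u,
    le_min (add_nonneg (sub_nonneg.mpr a.2.2) b.2.1) (a.2.1.trans a.2.2),
    min_le_right _ _⟩

/-- Top element (monoid unit) of `Γ(G,u)`. -/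
def hone {G : Type*} [AddCommGroup G] [LinearOrder G] [IsOrderedAddMonoid G] (u : G) (hu : 0 ≤ u) : Gam u :=
  ⟨u, hu, le_rfl⟩

theorem lex_nonneg (a b : ℤ) (h : 0 < a) : (0 : ℤ ×ₗ ℤ) ≤ toLex (a, b) :=
  Prod.Lex.le_iff.mpr (Or.inl h)

/-- A filter of `Γ(G,u)`: contains the top, is upward closed, and is closed under
the monoid product. -/
def GFilter {G : Type*} [AddCommGroup G] [LinearOrder G] [IsOrderedAddMonoid G] {u : G} (hu : 0 ≤ u)
    (F : Set (Gam u)) : Prop :=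
  hone u hu ∈ F ∧ (∀ a b : Gam u, a ∈ F → a.1 ≤ b.1 → b ∈ F) ∧
    (∀ a b : Gam u, a ∈ F → b ∈ F → hmul a b ∈ F)

/-- A maximal (proper) filter of `Γ(G,u)`. -/
def GMaxFilter {G : Type*} [AddCommGroup G] [LinearOrder G] [IsOrderedAddMonoid G] {u : G} (hu : 0 ≤ u)
    (F : Set (Gam u)) : Prop :=
  GFilter hu F ∧ F ≠ Set.univ ∧
    ∀ F', GFilter hu F' → F ⊆ F' → F' = F ∨ F' = Set.univ

/-- The radical of `Γ(G,u)`: the intersection of its maximal proper filters. -/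
def GRad {G : Type*} [AddCommGroup G] [LinearOrder G] [IsOrderedAddMonoid G] {u : G} (hu : 0 ≤ u) : Set (Gam u) :=
  {x | ∀ F, GMaxFilter hu F → x ∈ F}

section Aux

open scoped Classical

lemma fst_mono {x y : ℤ ×ₗ ℤ} (h : x ≤ y) : (ofLex x).1 ≤ (ofLex y).1 := by
  rcases Prod.Lex.le_iff.mp h with h | h
  · exact h.le
  · exact h.1.le

lemma fst_max (x y : ℤ ×ₗ ℤ) : (ofLex (max x y)).1 = max (ofLex x).1 (ofLex y).1 := by
  rcases le_total x y with h | h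
  · rw [max_eq_right h, max_eq_right (fst_mono h)]
  · rw [max_eq_left h, max_eq_left (fst_mono h)]

lemma fst_min (x y : ℤ ×ₗ ℤ) : (ofLex (min x y)).1 = min (ofLex x).1 (ofLex y).1 := by
  rcases le_total x y with h | h
  · rw [min_eq_left h, min_eq_left (fst_mono h)]
  · rw [min_eq_right h, min_eq_right (fst_mono h)]

variable {n k : ℤ}

/-- first coordinate of an element of `Γ(ℤ ×ₗ ℤ, (n,k))`. -/
def pf (a : Gam (toLex (n, k))) : ℤ := (ofLex a.1).1

lemma pf_nonneg (a : Gam (toLex (n, k))) : 0 ≤ pf a := fst_mono a.2.1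

lemma pf_le (a : Gam (toLex (n, k))) : pf a ≤ n := fst_mono a.2.2

lemma pf_hmul (a b : Gam (toLex (n, k))) :
    pf (hmul a b) = max (pf a + pf b - n) 0 := by
  show (ofLex (max (a.1 + b.1 - toLex (n, k)) 0)).1 = _
  rw [fst_max]; rfl

lemma pf_himp (a b : Gam (toLex (n, k))) :
    pf (himp a b) = min (n - pf a + pf b) n := by
  show (ofLex (min (toLex (n, k) - a.1 + b.1) (toLex (n, k)))).1 = _
  rw [fst_min]; rfl

/-- the bottom element -/
def gbot (hu : (0 : ℤ ×ₗ ℤ) ≤ toLex (n, k)) : Gam (toLex (n, k)) := ⟨0, le_rfl, hu⟩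

lemma filter_univ_of_lt (hn : 1 ≤ n) (hu : (0 : ℤ ×ₗ ℤ) ≤ toLex (n, k))
    {F : Set (Gam (toLex (n, k)))} (hF : GFilter hu F)
    {c : Gam (toLex (n, k))} (hc : c ∈ F) (hlt : pf c < n) : F = Set.univ := by
  have key : ∀ t : ℕ, ∀ c : Gam (toLex (n, k)), c ∈ F → pf c < n → pf c ≤ t →
      gbot hu ∈ F := by
    intro t
    induction t with
    | zero =>
      intro c hc hcn hc0
      have h0 : pf c = 0 := le_antisymm hc0 (pf_nonneg c)
      have hd : hmul c c ∈ F := hF.2.2 c c hc hc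
      have : hmul c c = gbot hu := by
        apply Subtype.ext
        show max (c.1 + c.1 - toLex (n, k)) 0 = 0
        apply max_eq_right
        apply le_of_lt
        apply Prod.Lex.lt_iff.mpr
        left
        show pf c + pf c - n < 0
        omega
      rwa [this] at hd
    | succ t ih =>
      intro c hc hcn hct
      rcases le_or_gt (pf c) t with h | h
      · exact ih c hc hcn h
      have hceq : pf c = t + 1 := le_antisymm hct h
      have hd : hmul c c ∈ F := hF.2.2 c c hc hc
      have hdn : pf (hmul c c) ≤ t := by
        rw [pf_hmul]; omega
      have hdn' : pf (hmul c c) < n := by omega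
      exact ih _ hd hdn' hdn
  have hbot : gbot hu ∈ F := key (pf c).toNat c hc hlt (Int.self_le_toNat _)
  ext a
  simp only [Set.mem_univ, iff_true]
  exact hF.2.1 (gbot hu) a hbot a.2.1

/-- the unique maximal filter -/
def F0 (n k : ℤ) : Set (Gam (toLex (n, k))) := {a | pf a = n}

lemma F0_filter (hn : 1 ≤ n) (hu : (0 : ℤ ×ₗ ℤ) ≤ toLex (n, k)) :
    GFilter hu (F0 n k) := by
  refine ⟨rfl, ?_, ?_⟩
  · intro a b ha hab
    have hb : pf a ≤ pf b := fst_mono hab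
    have ha' : pf a = n := ha
    show pf b = n
    have hb2 := pf_le b
    omega
  · intro a b ha hb
    show pf (hmul a b) = n
    rw [pf_hmul]
    have ha' : pf a = n := ha
    have hb' : pf b = n := hb
    omega

lemma F0_ne_univ (hn : 1 ≤ n) (hu : (0 : ℤ ×ₗ ℤ) ≤ toLex (n, k)) :
    F0 n k ≠ Set.univ := by
  intro h
  have : gbot hu ∈ F0 n k := h ▸ Set.mem_univ _
  have : (0 : ℤ) = n := this
  omega

lemma F0_max (hn : 1 ≤ n) (hu : (0 : ℤ ×ₗ ℤ) ≤ toLex (n, k)) :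
    GMaxFilter hu (F0 n k) := by
  refine ⟨F0_filter hn hu, F0_ne_univ hn hu, ?_⟩
  intro F' hF' hsub
  by_cases h : F' ⊆ F0 n k
  · exact Or.inl (Set.Subset.antisymm h hsub)
  · right
    obtain ⟨c, hc, hcn⟩ := Set.not_subset.mp h
    exact filter_univ_of_lt hn hu hF' hc (lt_of_le_of_ne (pf_le c) hcn)

lemma max_eq_F0 (hn : 1 ≤ n) (hu : (0 : ℤ ×ₗ ℤ) ≤ toLex (n, k))
    {F : Set (Gam (toLex (n, k)))} (hF : GMaxFilter hu F) : F = F0 n k := by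
  have hsub : F ⊆ F0 n k := by
    intro c hc
    by_contra hcn
    exact hF.2.1 (filter_univ_of_lt hn hu hF.1 hc
      (lt_of_le_of_ne (pf_le c) hcn))
  rcases hF.2.2 (F0 n k) (F0_filter hn hu) hsub with h | h
  · exact h.symm
  · exact absurd h (F0_ne_univ hn hu)

lemma rad_eq_F0 (hn : 1 ≤ n) (hu : (0 : ℤ ×ₗ ℤ) ≤ toLex (n, k)) :
    GRad hu = F0 n k := by
  ext a
  constructor
  · intro ha
    exact ha _ (F0_max hn hu)
  · intro ha F hF
    rw [max_eq_F0 hn hu hF]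
    exact ha

end Aux

/-- the quotient of `Ł_{n,k}` by (the congruence associated with) its
radical is isomorphic to the finite chain `Ł_n`; i.e. `Ł_{n,k}` has rank `n`.  The
isomorphism is witnessed by a surjection `q` onto `Ł_n` whose kernel is exactly the
radical congruence `a ∼ b ↔ a→b ∈ Rad ∧ b→a ∈ Rad`, and which preserves the
operations. -/

theorem Lnk_rank_n (n k : ℕ) (hn : 1 ≤ n) :
    ∃ q : Gam (toLex ((n : ℤ), (k : ℤ))) → Gam ((n : ℤ)),
      Function.Surjective q ∧
      (∀ a b, q a = q b ↔
        (himp a b ∈ GRad (lex_nonneg _ _ (by exact_mod_cast hn)) ∧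
         himp b a ∈ GRad (lex_nonneg _ _ (by exact_mod_cast hn)))) ∧
      q (hone _ (lex_nonneg _ _ (by exact_mod_cast hn))) = hone _ (Int.natCast_nonneg n) ∧
      (∀ a b, q (hmul a b) = hmul (q a) (q b)) ∧
      (∀ a b, q (himp a b) = himp (q a) (q b)) := by

  have hn' : (1 : ℤ) ≤ (n : ℤ) := by exact_mod_cast hn
  have hk' : (0 : ℤ) ≤ (k : ℤ) := Int.natCast_nonneg k
  refine ⟨fun a => ⟨pf a, pf_nonneg a, pf_le a⟩, ?_, ?_, ?_, ?_, ?_⟩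
  · rintro ⟨x, hx0, hxn⟩
    refine ⟨⟨toLex (x, 0), ?_, ?_⟩, ?_⟩
    · apply Prod.Lex.le_iff.mpr
      rcases hx0.lt_or_eq with h | h
      · exact Or.inl h
      · exact Or.inr ⟨h, le_rfl⟩
    · apply Prod.Lex.le_iff.mpr
      rcases hxn.lt_or_eq with h | h
      · exact Or.inl h
      · exact Or.inr ⟨h, hk'⟩
    · rfl
  · intro a b
    rw [rad_eq_F0 hn' _]
    constructor
    · intro h
      have h' : pf a = pf b := congrArg Subtype.val h
      constructor
      · show pf (himp a b) = (n : ℤ)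
        rw [pf_himp]; omega
      · show pf (himp b a) = (n : ℤ)
        rw [pf_himp]; omega
    · rintro ⟨h1, h2⟩
      have h1' : min ((n : ℤ) - pf a + pf b) n = n := (pf_himp a b) ▸ h1
      have h2' : min ((n : ℤ) - pf b + pf a) n = n := (pf_himp b a) ▸ h2
      exact Subtype.ext (by show pf a = pf b; omega)
  · rfl
  · intro a b
    exact Subtype.ext (pf_hmul a b)
  · intro a b
    exact Subtype.ext (pf_himp a b)
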